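/- In an odd cycle C_{2m+1} (m ≥ 1), two distinct vertices are mutually maximally distant if and only if they are at distance m; hence the strong resolving graph of C_{2m+1} is isomorphic to the cycle C_{2m+1}. -/

import Mathlib

open SimpleGraph

def maxDistantFrom {V : Type*} (G : SimpleGraph V) (u v : V) : Prop :=
  ∀ w : V, G.Adj u w → G.dist v w ≤ G.dist v u

def mmd {V : Type*} (G : SimpleGraph V) (u v : V) : Prop :=
  maxDistantFrom G u v ∧ maxDistantFrom G v u

def srGraph {V : Type*} (G : SimpleGraph V) : SimpleGraph V where
  Adj u v := u ≠ v ∧ mmd G u v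
  symm := by
    constructor
    rintro u v ⟨h1, h2, h3⟩
    exact ⟨h1.symm, h3, h2⟩
  loopless := by
    constructor
    rintro u ⟨h1, -⟩
    exact h1 rfl

namespace CycAux
open Fin.CommRing

lemma val_add_one' {n : ℕ} (x : Fin (n+1)) (h : x + 1 ≠ 0) : (x + 1).val = x.val + 1 := by
  rcases eq_or_ne x (Fin.last n) with rfl | hx
  · exact absurd (by simp [Fin.last_add_one]) h
  · rw [Fin.val_add_one]; simp [hx]

lemma val_sub_one' {n : ℕ} (x : Fin (n+1)) (h : x ≠ 0) : (x - 1).val = x.val - 1 := by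
  have h2 : (x - 1) + 1 = x := by ring
  have := val_add_one' (x - 1) (by rw [h2]; exact h)
  rw [h2] at this
  omega

lemma val_neg' {n : ℕ} (x : Fin (n+1)) (h : x ≠ 0) : (-x).val = n + 1 - x.val := by
  have hx : 1 ≤ x.val := by
    rcases Nat.eq_zero_or_pos x.val with h0 | h0
    · exact absurd (Fin.ext h0) h
    · exact h0
  have : (-x) = 0 - x := by ring
  rw [this, Fin.sub_def]
  simp only [Fin.val_zero, Nat.add_zero]
  exact Nat.mod_eq_of_lt (by omega)

lemma val_one' {n : ℕ} (hn : 1 ≤ n) : (1 : Fin (n+1)).val = 1 := by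
  rw [Fin.val_one']
  exact Nat.mod_eq_of_lt (by omega)

lemma adj_iff {n : ℕ} (hn : 1 ≤ n) (u v : Fin (n+1)) :
    (cycleGraph (n+1)).Adj u v ↔ (u - v = 1 ∨ v - u = 1) := by
  rw [cycleGraph_adj']
  constructor
  · rintro (h | h)
    · exact Or.inl (Fin.ext (by rw [h, val_one' hn]))
    · exact Or.inr (Fin.ext (by rw [h, val_one' hn]))
  · rintro (h | h)
    · exact Or.inl (by rw [h, val_one' hn])
    · exact Or.inr (by rw [h, val_one' hn])

lemma dist_upper {n : ℕ} (hn : 1 ≤ n) (u : Fin (n+1)) (k : ℕ) :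
    (cycleGraph (n+1)).dist u (u + (k : Fin (n+1))) ≤ k := by
  induction k with
  | zero => simp
  | succ k ih =>
    have h1 : ((k+1 : ℕ) : Fin (n+1)) = (k : Fin (n+1)) + 1 := by push_cast; ring
    have tri := (cycleGraph_connected (n := n)).dist_triangle
      (u := u) (v := u + (k : Fin (n+1))) (w := u + ((k+1 : ℕ) : Fin (n+1)))
    have hadj : (cycleGraph (n+1)).Adj (u + (k : Fin (n+1))) (u + ((k+1 : ℕ) : Fin (n+1))) := by
      rw [adj_iff hn]
      right
      rw [h1]; ring
    have h2 : (cycleGraph (n+1)).dist (u + (k : Fin (n+1))) (u + ((k+1 : ℕ) : Fin (n+1))) = 1 :=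
      dist_eq_one_iff_adj.mpr hadj
    omega

lemma walk_lower {n : ℕ} : ∀ {u v : Fin (n+1)} (p : (cycleGraph (n+1)).Walk u v),
    min ((v - u).val) ((u - v).val) ≤ p.length := by
  intro u v p
  induction p with
  | nil => simp
  | @cons u w v h p ih =>
    rw [Walk.length_cons]
    rcases eq_or_ne u v with rfl | huv
    · simp
    have hn : 1 ≤ n := by
      rcases cycleGraph_adj'.mp h with h1 | h1 <;>
        [skip; skip] <;> { have := (by omega : 1 < n + 1); omega }
    rcases eq_or_ne w v with rfl | hwv
    · rcases (adj_iff hn u w).mp h with h1 | h1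
      · have : (u - w).val = 1 := by rw [h1, val_one' hn]
        omega
      · have : (w - u).val = 1 := by rw [h1, val_one' hn]
        omega
    · rcases (adj_iff hn u w).mp h with h1 | h1
      · -- u - w = 1, i.e. w = u - 1
        have hw : w = u - 1 := by
          have : u - (u - w) = u - 1 := by rw [h1]
          simpa [sub_sub_cancel] using this
        subst hw
        -- v - u = (v - (u-1)) - 1 ; u - v = ((u-1) - v) + 1
        have e1 : v - u = (v - (u - 1)) - 1 := by ring
        have e2 : u - v = ((u - 1) - v) + 1 := by ring
        have hv1 : v - (u - 1) ≠ 0 := sub_ne_zero_of_ne hwv.symm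
        have hv2 : ((u - 1) - v) + 1 ≠ 0 := by rw [← e2]; exact sub_ne_zero_of_ne huv
        have c1 : (v - u).val = (v - (u - 1)).val - 1 := by rw [e1, val_sub_one' _ hv1]
        have c2 : (u - v).val = ((u - 1) - v).val + 1 := by rw [e2, val_add_one' _ hv2]
        omega
      · -- w - u = 1, i.e. w = u + 1
        have hw : w = u + 1 := by
          have : u + (w - u) = u + 1 := by rw [h1]
          simpa using this
        subst hw
        have e1 : v - u = (v - (u + 1)) + 1 := by ring
        have e2 : u - v = ((u + 1) - v) - 1 := by ring
        have hv1 : (u + 1) - v ≠ 0 := sub_ne_zero_of_ne hwv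
        have hv2 : (v - (u + 1)) + 1 ≠ 0 := by rw [← e1]; exact sub_ne_zero_of_ne (Ne.symm huv)
        have c1 : (v - u).val = (v - (u + 1)).val + 1 := by rw [e1, val_add_one' _ hv2]
        have c2 : (u - v).val = ((u + 1) - v).val - 1 := by rw [e2, val_sub_one' _ hv1]
        omega

lemma cycle_dist {n : ℕ} (hn : 1 ≤ n) (u v : Fin (n+1)) :
    (cycleGraph (n+1)).dist u v = min ((v - u).val) ((u - v).val) := by
  apply le_antisymm
  · apply le_min
    · have := dist_upper hn u (v - u).val
      rwa [Fin.cast_val_eq_self, add_sub_cancel] at this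
    · have := dist_upper hn v (u - v).val
      rw [Fin.cast_val_eq_self, add_sub_cancel] at this
      rwa [SimpleGraph.dist_comm] at this
  · obtain ⟨p, hp⟩ := (cycleGraph_connected (n := n)).exists_walk_length_eq_dist u v
    have := walk_lower p
    omega

lemma val_pos {n : ℕ} {x : Fin (n+1)} (h : x ≠ 0) : 1 ≤ x.val := by
  rcases Nat.eq_zero_or_pos x.val with h0 | h0
  · exact absurd (Fin.ext h0) h
  · exact h0

lemma sum_vals {m : ℕ} {u v : Fin (2*m+1)} (h : u ≠ v) :
    (v - u).val + (u - v).val = 2*m+1 := by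
  have hvu : v - u ≠ 0 := sub_ne_zero_of_ne h.symm
  have h2 : u - v = -(v - u) := by ring
  have h1 := val_pos hvu
  rw [h2, val_neg' _ hvu]
  have := (v - u).isLt
  omega

lemma dist_le_m {m : ℕ} (hm : 1 ≤ m) (u v : Fin (2*m+1)) :
    (cycleGraph (2*m+1)).dist u v ≤ m := by
  rcases eq_or_ne u v with rfl | h
  · rw [dist_self]; omega
  · rw [cycle_dist (by omega) u v]
    have := sum_vals h
    omega

lemma mmd_iff {m : ℕ} (hm : 1 ≤ m) (u v : Fin (2*m+1)) (huv : u ≠ v) :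
    mmd (cycleGraph (2*m+1)) u v ↔ (cycleGraph (2*m+1)).dist u v = m := by
  have hn : 1 ≤ 2*m := by omega
  constructor
  · intro hmmd
    by_contra hne
    have hsum := sum_vals huv
    have hle := dist_le_m hm u v
    rw [cycle_dist hn u v] at hne hle
    set a := (v - u).val with ha
    set b := (u - v).val with hb
    have hvu : v - u ≠ 0 := sub_ne_zero_of_ne huv.symm
    have huv' : u - v ≠ 0 := sub_ne_zero_of_ne huv
    have ha1 := val_pos hvu
    have hb1 := val_pos huv'
    rcases le_or_gt a b with hab | hab
    · -- a < m, witness w = u - 1 breaks maxDistantFrom u v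
      have ham : a < m := by omega
      have hadj : (cycleGraph (2*m+1)).Adj u (u - 1) := by
        rw [adj_iff hn]; left; ring
      have hd := hmmd.1 (u - 1) hadj
      -- compute dist v (u - 1)
      have e1 : (u - 1) - v = (u - v) - 1 := by ring
      have e2 : v - (u - 1) = (v - u) + 1 := by ring
      have hne2 : (v - u) + 1 ≠ 0 := by
        intro h0
        have : v - u = -1 := eq_neg_of_add_eq_zero_left h0
        have : a = 2*m + 1 - 1 := by
          rw [ha, this, val_neg' _ (by
            intro h1
            exact absurd (congrArg Fin.val h1) (by rw [val_one' hn]; simp)), val_one' hn]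
        omega
      have c1 : ((u - 1) - v).val = b - 1 := by rw [e1, val_sub_one' _ huv']
      have c2 : (v - (u - 1)).val = a + 1 := by rw [e2, val_add_one' _ hne2]
      rw [cycle_dist hn v (u - 1), cycle_dist hn v u] at hd
      have g1 : (u - v).val = b := rfl
      have g2 : (v - u).val = a := rfl
      rw [c1, c2] at hd
      -- Note: cycle_dist v (u-1) = min (((u-1) - v).val) ((v - (u-1)).val)
      omega
    · have hbm : b < m := by omega
      have hadj : (cycleGraph (2*m+1)).Adj u (u + 1) := by
        rw [adj_iff hn]; right; ring
      have hd := hmmd.1 (u + 1) hadj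
      have e1 : (u + 1) - v = (u - v) + 1 := by ring
      have e2 : v - (u + 1) = (v - u) - 1 := by ring
      have hne2 : (u - v) + 1 ≠ 0 := by
        intro h0
        have : u - v = -1 := eq_neg_of_add_eq_zero_left h0
        have : b = 2*m + 1 - 1 := by
          rw [hb, this, val_neg' _ (by
            intro h1
            exact absurd (congrArg Fin.val h1) (by rw [val_one' hn]; simp)), val_one' hn]
        omega
      have c1 : ((u + 1) - v).val = b + 1 := by rw [e1, val_add_one' _ hne2]
      have c2 : (v - (u + 1)).val = a - 1 := by rw [e2, val_sub_one' _ hvu]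
      rw [cycle_dist hn v (u + 1), cycle_dist hn v u] at hd
      rw [c1, c2] at hd
      omega
  · intro hdist
    constructor
    · intro w hw
      calc (cycleGraph (2*m+1)).dist v w ≤ m := dist_le_m hm v w
        _ = (cycleGraph (2*m+1)).dist v u := by rw [SimpleGraph.dist_comm]; exact hdist.symm
    · intro w hw
      calc (cycleGraph (2*m+1)).dist u w ≤ m := dist_le_m hm u w
        _ = (cycleGraph (2*m+1)).dist u v := hdist.symm

end CycAux

namespace CycAux2
open CycAux
open Fin.CommRing

lemma hkey (m : ℕ) : (m : Fin (2*m+1)) + ((m : Fin (2*m+1)) + 1) = 0 := by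
  have h : ((2*m+1 : ℕ) : Fin (2*m+1)) = 0 := Fin.natCast_self _
  push_cast at h
  linear_combination h

lemma hc2 (m : ℕ) : ((m : Fin (2*m+1)) + 1) * 2 = 1 := by
  linear_combination hkey m

lemma mF_val {m : ℕ} : ((m : ℕ) : Fin (2*m+1)).val = m := Fin.val_cast_of_lt (by omega)

lemma sr_iff {m : ℕ} (hm : 1 ≤ m) (u v : Fin (2*m+1)) :
    (srGraph (cycleGraph (2*m+1))).Adj u v ↔
      (v - u = (m : Fin (2*m+1)) ∨ v - u = -(m : Fin (2*m+1))) := by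
  have hn : 1 ≤ 2*m := by omega
  have hmF : ((m : ℕ) : Fin (2*m+1)) ≠ 0 := by
    intro h
    have := congrArg Fin.val h
    rw [mF_val] at this
    simp at this
    omega
  have hmv : (-(m : Fin (2*m+1))).val = m + 1 := by
    rw [val_neg' _ hmF, mF_val]; omega
  constructor
  · rintro ⟨hne, hmmd⟩
    have hd := (mmd_iff hm u v hne).mp hmmd
    rw [cycle_dist hn u v] at hd
    have hsum := sum_vals hne
    have : (v - u).val = m ∨ (v - u).val = m + 1 := by omega
    rcases this with h | h
    · exact Or.inl (Fin.ext (by rw [h, mF_val]))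
    · exact Or.inr (Fin.ext (by rw [h, hmv]))
  · intro h
    have hval : (v - u).val = m ∨ (v - u).val = m + 1 := by
      rcases h with h | h
      · left; rw [h, mF_val]
      · right; rw [h, hmv]
    have hne : u ≠ v := by
      intro h0
      subst h0
      have : (u - u).val = 0 := by simp
      omega
    refine ⟨hne, (mmd_iff hm u v hne).mpr ?_⟩
    rw [cycle_dist hn u v]
    have hsum := sum_vals hne
    omega

lemma iso_exists {m : ℕ} (hm : 1 ≤ m) :
    Nonempty (srGraph (cycleGraph (2*m+1)) ≃g cycleGraph (2*m+1)) := by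
  have hn : 1 ≤ 2*m := by omega
  have hk := hkey m
  have h1 := hc2 m
  refine ⟨⟨⟨fun x => 2*x, fun x => ((m : Fin (2*m+1)) + 1) * x, ?_, ?_⟩, ?_⟩⟩
  · intro x
    simp only
    linear_combination x * h1
  · intro x
    simp only
    linear_combination x * h1
  · intro a b
    simp only [Equiv.coe_fn_mk]
    rw [adj_iff hn, sr_iff hm a b]
    constructor
    · rintro (h | h)
      · -- 2a - 2b = 1 → b - a = m
        left
        have h2 : a - b = (m : Fin (2*m+1)) + 1 := by
          linear_combination (((m : Fin (2*m+1)) + 1)) * h - (a - b) * h1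
        linear_combination -h2 - hk
      · right
        have h2 : b - a = (m : Fin (2*m+1)) + 1 := by
          linear_combination (((m : Fin (2*m+1)) + 1)) * h - (b - a) * h1
        linear_combination h2 + hk
    · rintro (h | h)
      · left
        linear_combination -2*h - hk
      · right
        linear_combination 2*h - hk

end CycAux2

theorem stmt12 (m : ℕ) (hm : 1 ≤ m) :
    (∀ u v : Fin (2 * m + 1), u ≠ v →
      (mmd (cycleGraph (2 * m + 1)) u v ↔ (cycleGraph (2 * m + 1)).dist u v = m)) ∧
    Nonempty (srGraph (cycleGraph (2 * m + 1)) ≃g cycleGraph (2 * m + 1)) := by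
  exact ⟨fun u v huv => CycAux.mmd_iff hm u v huv, CycAux2.iso_exists hm⟩
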